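/- arXiv:2012.06661 — 2 statements merged into one kernel-verified Lean document; each statement's English description precedes it below -/
import Mathlib

section
/- Every Lie ideal of I(X,K) contained in J(I(X,K)) is spanned as a K-vector space by the standard basis elements e_{xy} it contains. -/
set_option maxHeartbeats 1000000
set_option synthInstance.maxHeartbeats 400000

open Matrix

variable (K X : Type*) [Field K] [Fintype X] [PartialOrder X] [DecidableEq X]

/-- The incidence algebra of a finite poset `X` over `K`, realized as the subalgebra of
matrices `f` with `f x y = 0` whenever `¬ x ≤ y`. -/
def IncAlg : Subalgebra K (Matrix X X K) where
  carrier := {f | ∀ x y : X, ¬ x ≤ y → f x y = 0}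
  zero_mem' := fun _ _ _ => rfl
  add_mem' := fun {f g} hf hg x y h => by
    simp [Matrix.add_apply, hf x y h, hg x y h]
  one_mem' := fun x y h => Matrix.one_apply_ne fun he => h (le_of_eq he)
  mul_mem' := fun {f g} hf hg x y h => by
    rw [Matrix.mul_apply]
    refine Finset.sum_eq_zero fun k _ => ?_
    by_cases hxk : x ≤ k
    · by_cases hky : k ≤ y
      · exact absurd (hxk.trans hky) h
      · rw [hg k y hky, mul_zero]
    · rw [hf x k hxk, zero_mul]
  algebraMap_mem' := fun c x y h => by
    rw [Matrix.algebraMap_matrix_apply]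
    exact if_neg fun he => h (le_of_eq he)

variable {X} in
/-- The standard basis element `e_{xy}` of the incidence algebra, for `x ≤ y`. -/
def eE (x y : X) (h : x ≤ y) : IncAlg K X :=
  ⟨Matrix.single x y 1, by
    intro a b hab
    by_cases hxa : x = a
    · by_cases hyb : y = b
      · subst hxa; subst hyb; exact absurd h hab
      · simp [Matrix.single, hyb]
    · simp [Matrix.single, hxa]⟩

variable {X} in
/-- The maximal length of a chain from `x` to `y` (the length `l(⌊x,y⌋)` of the interval). -/
noncomputable def chainLen (x y : X) : ℕ :=
  sSup {m | ∃ c : Fin (m + 1) → X, StrictMono c ∧ c 0 = x ∧ c (Fin.last m) = y}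

/-- The Jacobson radical of the incidence algebra: the functions vanishing on the diagonal. -/
def radJ : Submodule K (Matrix X X K) :=
  Submodule.span K {f | f ∈ IncAlg K X ∧ ∀ x : X, f x x = 0}

/-- `Jm K X m` is `Span_K {e_{xy} : l(⌊x,y⌋) ≥ m}`, i.e. `J_m = J(I(X,K))^m` for `m ≥ 1`. -/
noncomputable def Jm (m : ℕ) : Submodule K (Matrix X X K) :=
  Submodule.span K
    {E | ∃ x y : X, x ≤ y ∧ m ≤ chainLen x y ∧ E = Matrix.single x y (1 : K)}

/-- `Lm K X i` is `L_i = Span_K {e_{xy} : l(⌊x,y⌋) = i}`. -/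
noncomputable def Lm (i : ℕ) : Submodule K (Matrix X X K) :=
  Submodule.span K
    {E | ∃ x y : X, x ≤ y ∧ chainLen x y = i ∧ E = Matrix.single x y (1 : K)}

/-- The two-sided ideal of `I(X,K)` generated by a subset `S`: the smallest `K`-subspace
containing `S` that is closed under left and right multiplication by elements of `I(X,K)`. -/
def assocGen (S : Set (Matrix X X K)) : Submodule K (Matrix X X K) :=
  sInf {I | S ⊆ I ∧ ∀ f ∈ IncAlg K X, ∀ g ∈ I, f * g ∈ I ∧ g * f ∈ I}

/-- A poset is connected if any two points are joined by a sequence of comparabilities. -/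
def PosetConnected (X : Type*) [PartialOrder X] : Prop :=
  ∀ a b : X, Relation.ReflTransGen (fun u v : X => u ≤ v ∨ v ≤ u) a b

variable {K X} in
/-- `φ` is a Lie automorphism of the incidence algebra. -/
def IsLieAut (φ : IncAlg K X ≃ₗ[K] IncAlg K X) : Prop :=
  ∀ a b : IncAlg K X, φ (a * b - b * a) = φ a * φ b - φ b * φ a


-- auxiliary: radJ members are incidence matrices with zero diagonal
def radJ' : Submodule K (Matrix X X K) where
  carrier := {f | (∀ x y : X, ¬ x ≤ y → f x y = 0) ∧ ∀ x : X, f x x = 0}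
  zero_mem' := ⟨fun _ _ _ => rfl, fun _ => rfl⟩
  add_mem' := fun {f g} hf hg => ⟨fun x y h => by
      simp [Matrix.add_apply, hf.1 x y h, hg.1 x y h],
    fun x => by simp [Matrix.add_apply, hf.2 x, hg.2 x]⟩
  smul_mem' := fun c f hf => ⟨fun x y h => by simp [Matrix.smul_apply, hf.1 x y h],
    fun x => by simp [Matrix.smul_apply, hf.2 x]⟩

lemma radJ_le : radJ K X ≤ radJ' K X := by
  rw [radJ, Submodule.span_le]
  rintro f ⟨hf1, hf2⟩
  exact ⟨hf1, hf2⟩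

variable {K X} in
lemma sbm_conj (f : Matrix X X K) (x y : X) :
    Matrix.single x x (1:K) * f * Matrix.single y y 1
      = Matrix.single x y (f x y) := by
  ext i j
  by_cases hj : j = y
  · subst hj
    rw [Matrix.mul_single_apply_same]
    by_cases hi : i = x
    · subst hi
      rw [Matrix.single_mul_apply_same]
      simp
    · rw [Matrix.single_mul_apply_of_ne _ _ _ _ _ hi, zero_mul,
        Matrix.single_apply_of_ne]
      exact fun h => hi h.1.symm
  · rw [Matrix.mul_single_apply_of_ne _ _ _ _ _ hj,
      Matrix.single_apply_of_ne]
    exact fun h => hj h.2.symm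


/-- every Lie ideal of `I(X,K)` contained in `J(I(X,K))` is spanned by the
standard basis elements it contains. -/
theorem stmt6 (I : Submodule K (Matrix X X K)) (hIJ : I ≤ radJ K X)
    (hLie : ∀ f ∈ IncAlg K X, ∀ g ∈ I, f * g - g * f ∈ I) :
    I = Submodule.span K {E : Matrix X X K |
        (∃ x y : X, x ≤ y ∧ E = Matrix.single x y (1 : K)) ∧ E ∈ I} := by
  apply le_antisymm
  · intro f hf
    obtain ⟨hInc, hDiag⟩ := radJ_le K X (hIJ hf)
    have key : ∀ x y : X, x ≠ y → Matrix.single x y (f x y) ∈ I := by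
      intro x y hxy
      have hdiag : ∀ z : X, (Matrix.single z z (1:K)) ∈ IncAlg K X := by
        intro z a b hab
        apply Matrix.single_apply_of_ne
        rintro ⟨rfl, rfl⟩
        exact hab le_rfl
      set exx := Matrix.single x x (1:K) with hexx
      set eyy := Matrix.single y y (1:K) with heyy
      have h1 : eyy * f - f * eyy ∈ I := hLie _ (hdiag y) f hf
      have h2 : exx * (eyy * f - f * eyy) - (eyy * f - f * eyy) * exx ∈ I :=
        hLie _ (hdiag x) _ h1
      have h0 : exx * eyy = 0 := Matrix.single_mul_single_of_ne _ _ _ _ hxy 1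
      have h0' : eyy * exx = 0 := Matrix.single_mul_single_of_ne _ _ _ _ (Ne.symm hxy) 1
      have heq : exx * (eyy * f - f * eyy) - (eyy * f - f * eyy) * exx
          = -(Matrix.single x y (f x y)) - Matrix.single y x (f y x) := by
        rw [mul_sub, sub_mul, ← mul_assoc exx eyy f, h0, zero_mul,
          mul_assoc f eyy exx, h0', mul_zero, ← mul_assoc exx f eyy,
          sbm_conj f x y, sbm_conj f y x]
        abel
      rw [heq] at h2
      by_cases hyx : y ≤ x
      · have hnxy : ¬ x ≤ y := fun h => hxy (le_antisymm h hyx)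
        rw [hInc x y hnxy, Matrix.single_zero]
        exact I.zero_mem
      · rw [hInc y x hyx, Matrix.single_zero, sub_zero] at h2
        simpa using I.neg_mem h2
    rw [Matrix.matrix_eq_sum_single f]
    refine Submodule.sum_mem _ fun x _ => Submodule.sum_mem _ fun y _ => ?_
    by_cases hxy : x = y
    · subst hxy
      rw [hDiag x, Matrix.single_zero]
      exact Submodule.zero_mem _
    · by_cases hz : f x y = 0
      · rw [hz, Matrix.single_zero]; exact Submodule.zero_mem _
      · have hle : x ≤ y := by
          by_contra h
          exact hz (hInc x y h)
        have hE : Matrix.single x y (1:K) ∈ I := by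
          have := I.smul_mem (f x y)⁻¹ (key x y hxy)
          rwa [Matrix.smul_single, smul_eq_mul, inv_mul_cancel₀ hz] at this
        have hrw : Matrix.single x y (f x y)
            = (f x y) • Matrix.single x y (1:K) := by
          rw [Matrix.smul_single, smul_eq_mul, mul_one]
        rw [hrw]
        exact Submodule.smul_mem _ _ (Submodule.subset_span ⟨⟨x, y, hle, rfl⟩, hE⟩)
  · rw [Submodule.span_le]
    rintro E ⟨_, hE⟩
    exact hE
end

section
/- Let φ be a Lie automorphism of I(X,K) such that for every basis element e_{xy} ∈ L_i one has φ(e_{xy}) − e_{xy} ∈ J_{i+1} (i.e., the induced map on each layer is the identity). Then φ(e_x) belongs to the two-sided ideal generated by e_x, for all x ∈ X. -/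
set_option maxHeartbeats 1000000
set_option synthInstance.maxHeartbeats 400000

open Matrix

variable (K X : Type*) [Field K] [Fintype X] [PartialOrder X] [DecidableEq X]

variable {K X} in
/-- `φ` lies in the kernel of `φ ↦ φ̃`: for `a ∈ L_i`, `φ(a) − a ∈ J_{i+1}`. -/
def InTildeKernel (φ : IncAlg K X ≃ₗ[K] IncAlg K X) : Prop :=
  ∀ (i : ℕ) (a : IncAlg K X), (a : Matrix X X K) ∈ Lm K X i →
    ((φ a : Matrix X X K) - (a : Matrix X X K)) ∈ Jm K X (i + 1)


section Aux

variable {K X}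

omit [Fintype X] [DecidableEq X] in
lemma chainSet_zero_mem (x : X) :
    (0 : ℕ) ∈ {m | ∃ c : Fin (m + 1) → X, StrictMono c ∧ c 0 = x ∧ c (Fin.last m) = x} := by
  refine ⟨fun _ => x, ?_, rfl, rfl⟩
  intro i j hij
  exfalso
  have hi := i.isLt
  have hj := j.isLt
  rw [Fin.lt_def] at hij
  omega

lemma chainSet_bddAbove (x y : X) :
    BddAbove {m | ∃ c : Fin (m + 1) → X, StrictMono c ∧ c 0 = x ∧ c (Fin.last m) = y} := by
  refine ⟨Fintype.card X, fun m hm => ?_⟩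
  obtain ⟨c, hc, -, -⟩ := hm
  have := Fintype.card_le_of_injective c hc.injective
  simp only [Fintype.card_fin] at this
  omega

lemma chainLen_self (x : X) : chainLen x x = 0 := by
  have hset : {m | ∃ c : Fin (m + 1) → X, StrictMono c ∧ c 0 = x ∧ c (Fin.last m) = x}
      = {0} := by
    ext m
    simp only [Set.mem_setOf_eq, Set.mem_singleton_iff]
    constructor
    · rintro ⟨c, hc, h0, hl⟩
      by_contra hm
      have hlt : (0 : Fin (m + 1)) < Fin.last m := by
        rw [Fin.lt_def]
        simpa using Nat.pos_of_ne_zero hm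
      have := hc hlt
      rw [h0, hl] at this
      exact lt_irrefl x this
    · rintro rfl
      exact chainSet_zero_mem x
  unfold chainLen
  rw [hset]
  exact csSup_singleton 0

lemma one_le_chainLen {x y : X} (h : x < y) : 1 ≤ chainLen x y := by
  have hmem : (1 : ℕ) ∈ {m | ∃ c : Fin (m + 1) → X, StrictMono c ∧ c 0 = x
      ∧ c (Fin.last m) = y} := by
    refine ⟨fun i => if i = 0 then x else y, ?_, by simp, by simp [Fin.ext_iff]⟩
    intro i j hij
    fin_cases i <;> fin_cases j <;> simp_all
  exact le_csSup (chainSet_bddAbove x y) hmem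

lemma chainLen_exists {x y : X} (h : x ≤ y) :
    ∃ c : Fin (chainLen x y + 1) → X, StrictMono c ∧ c 0 = x ∧ c (Fin.last _) = y := by
  have hne : Set.Nonempty {m | ∃ c : Fin (m + 1) → X, StrictMono c ∧ c 0 = x
      ∧ c (Fin.last m) = y} := by
    rcases eq_or_lt_of_le h with rfl | hlt
    · exact ⟨0, chainSet_zero_mem x⟩
    · refine ⟨1, fun i => if i = 0 then x else y, ?_, by simp, by simp [Fin.ext_iff]⟩
      intro i j hij
      fin_cases i <;> fin_cases j <;> simp_all
  exact Nat.sSup_mem hne (chainSet_bddAbove x y)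

lemma chainLen_prepend {u k v : X} (huk : u < k) (hkv : k ≤ v) :
    chainLen k v < chainLen u v := by
  obtain ⟨c, hc, h0, hl⟩ := chainLen_exists hkv
  have hmem : chainLen k v + 1 ∈ {n | ∃ c : Fin (n + 1) → X, StrictMono c ∧ c 0 = u
      ∧ c (Fin.last n) = v} := by
    refine ⟨Fin.cons u c, ?_, rfl, ?_⟩
    · intro i j hij
      obtain rfl | ⟨i', rfl⟩ := Fin.eq_zero_or_eq_succ i
      · obtain rfl | ⟨j', rfl⟩ := Fin.eq_zero_or_eq_succ j
        · exact absurd hij (lt_irrefl _)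
        · rw [Fin.cons_zero, Fin.cons_succ]
          exact huk.trans_le (h0 ▸ hc.monotone (Fin.zero_le j'))
      · obtain rfl | ⟨j', rfl⟩ := Fin.eq_zero_or_eq_succ j
        · exact absurd hij (Fin.not_lt_zero _)
        · rw [Fin.cons_succ, Fin.cons_succ]
          exact hc (by simpa [Fin.succ_lt_succ_iff] using hij)
    · rw [← Fin.succ_last, Fin.cons_succ, hl]
  exact lt_of_lt_of_le (Nat.lt_succ_self _) (le_csSup (chainSet_bddAbove u v) hmem)

lemma chainLen_append {u k v : X} (huk : u ≤ k) (hkv : k < v) :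
    chainLen u k < chainLen u v := by
  obtain ⟨c, hc, h0, hl⟩ := chainLen_exists huk
  have hmem : chainLen u k + 1 ∈ {n | ∃ c : Fin (n + 1) → X, StrictMono c ∧ c 0 = u
      ∧ c (Fin.last n) = v} := by
    refine ⟨Fin.snoc c v, ?_, ?_, by simp⟩
    · intro i j hij
      obtain ⟨i', rfl⟩ | rfl := Fin.eq_castSucc_or_eq_last i
      · obtain ⟨j', rfl⟩ | rfl := Fin.eq_castSucc_or_eq_last j
        · rw [Fin.snoc_castSucc, Fin.snoc_castSucc]
          exact hc (by simpa [Fin.castSucc_lt_castSucc_iff] using hij)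
        · rw [Fin.snoc_castSucc, Fin.snoc_last]
          have hle : c i' ≤ c (Fin.last _) := hc.monotone (Fin.le_last i')
          rw [hl] at hle
          exact hle.trans_lt hkv
      · exact absurd hij (not_lt.mpr (Fin.le_last j))
    · have : (0 : Fin (chainLen u k + 2)) = Fin.castSucc 0 := rfl
      rw [this, Fin.snoc_castSucc, h0]
  exact lt_of_lt_of_le (Nat.lt_succ_self _) (le_csSup (chainSet_bddAbove u v) hmem)

def entryZeroSub (P : X → X → Prop) : Submodule K (Matrix X X K) where
  carrier := {g | ∀ a b : X, ¬ P a b → g a b = 0}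
  zero_mem' := fun _ _ _ => rfl
  add_mem' := fun {f g} hf hg a b hab => by
    simp [Matrix.add_apply, hf a b hab, hg a b hab]
  smul_mem' := fun c g hg a b hab => by
    simp [Matrix.smul_apply, hg a b hab]

lemma span_entry_zero {P : X → X → Prop} {S : Set (Matrix X X K)}
    (h : ∀ f ∈ S, ∀ a b : X, ¬ P a b → f a b = 0) {f : Matrix X X K}
    (hf : f ∈ Submodule.span K S) : ∀ a b : X, ¬ P a b → f a b = 0 := by
  have hsub : S ⊆ (entryZeroSub (K := K) P : Set (Matrix X X K)) := fun g hg => h g hg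
  exact Submodule.span_le.mpr hsub hf

lemma Jm_one_entry {f : Matrix X X K} (hf : f ∈ Jm K X 1) :
    ∀ a b : X, ¬ a < b → f a b = 0 := by
  refine span_entry_zero ?_ hf
  rintro g ⟨a, b, hab, hlen, rfl⟩ a' b' h
  have hne : a ≠ b := by
    rintro rfl
    rw [chainLen_self] at hlen
    omega
  have hlt : a < b := lt_of_le_of_ne hab hne
  have : ¬ (a = a' ∧ b = b') := by
    rintro ⟨rfl, rfl⟩
    exact h hlt
  simp [Matrix.single, this]

lemma mul_diagE_apply (M : Matrix X X K) (a u v : X) :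
    (M * Matrix.single a a (1 : K)) u v = if v = a then M u a else 0 := by
  classical
  rcases eq_or_ne v a with rfl | hv
  · simpa using Matrix.mul_single_apply_same (i := a) (j := a) (c := (1 : K)) u M
  · simp [Matrix.mul_single_apply_of_ne (hbj := hv), hv]

lemma diagE_mul_apply (M : Matrix X X K) (a u v : X) :
    (Matrix.single a a (1 : K) * M) u v = if u = a then M a v else 0 := by
  classical
  rcases eq_or_ne u a with rfl | hu
  · simpa using Matrix.single_mul_apply_same (i := a) (j := a) (c := (1 : K)) v M
  · simp [Matrix.single_mul_apply_of_ne (h := hu), hu]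

end Aux

/-- if the Lie automorphism `φ` induces the identity on each layer `L_i`
(mod `J_{i+1}`), then `φ(e_x)` lies in the two-sided ideal generated by `e_x`. -/
theorem stmt13 (hconn : PosetConnected X)
    (φ : IncAlg K X ≃ₗ[K] IncAlg K X) (hφ : IsLieAut φ) (hker : InTildeKernel φ) (x : X) :
    (φ (eE K x x le_rfl) : Matrix X X K) ∈
      assocGen K X {Matrix.single x x (1 : K)} := by
  classical
  set A : Matrix X X K := (φ (eE K x x le_rfl) : Matrix X X K) with hAdef
  set eM : Matrix X X K := Matrix.single x x (1 : K) with heM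
  set r : Matrix X X K := A - eM with hrdef
  -- membership of diagonal idempotents in L_0
  have hL0 : ∀ v : X, ((eE K v v le_rfl : IncAlg K X) : Matrix X X K) ∈ Lm K X 0 :=
    fun v => Submodule.subset_span ⟨v, v, le_rfl, chainLen_self v, rfl⟩
  -- the error terms are in J_1
  have hrJm : r ∈ Jm K X 1 := by
    have := hker 0 (eE K x x le_rfl) (hL0 x)
    simpa [hrdef, hAdef, heM, eE] using this
  have hrJ : ∀ a b : X, ¬ a < b → r a b = 0 := Jm_one_entry hrJm
  have hsJ : ∀ v : X, ∀ a b : X, ¬ a < b →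
      ((φ (eE K v v le_rfl) : Matrix X X K) - Matrix.single v v (1 : K)) a b = 0 := by
    intro v
    refine Jm_one_entry ?_
    have := hker 0 (eE K v v le_rfl) (hL0 v)
    simpa [eE] using this
  -- commutation of φ(e_x) with φ(e_v) for v ≠ x
  have hcomm : ∀ v : X, v ≠ x →
      A * (φ (eE K v v le_rfl) : Matrix X X K) = (φ (eE K v v le_rfl) : Matrix X X K) * A := by
    intro v hv
    have h0 : (eE K x x le_rfl) * (eE K v v le_rfl)
        - (eE K v v le_rfl) * (eE K x x le_rfl) = 0 := by
      apply Subtype.ext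
      push_cast
      show Matrix.single x x (1:K) * Matrix.single v v (1:K)
        - Matrix.single v v (1:K) * Matrix.single x x (1:K) = 0
      rw [Matrix.single_mul_single_of_ne (h := Ne.symm hv), Matrix.single_mul_single_of_ne (h := hv)]
      simp
    have := hφ (eE K x x le_rfl) (eE K v v le_rfl)
    rw [h0, map_zero] at this
    have h2 : φ (eE K x x le_rfl) * φ (eE K v v le_rfl)
        = φ (eE K v v le_rfl) * φ (eE K x x le_rfl) := by
      have := this.symm
      rwa [sub_eq_zero] at this
    calc A * (φ (eE K v v le_rfl) : Matrix X X K)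
        = ((φ (eE K x x le_rfl) * φ (eE K v v le_rfl) : IncAlg K X) : Matrix X X K) := rfl
      _ = ((φ (eE K v v le_rfl) * φ (eE K x x le_rfl) : IncAlg K X) : Matrix X X K) := by
          rw [h2]
      _ = (φ (eE K v v le_rfl) : Matrix X X K) * A := rfl
  -- the key entry equation: for u ≠ x, v ≠ x, w ≠ x:
  have hentry : ∀ u v w : X, u ≠ x → v ≠ x → w ≠ x →
      ((Matrix.single w w (1 : K)) * r) u v - (r * (Matrix.single w w (1 : K))) u v
        = ((r * ((φ (eE K w w le_rfl) : Matrix X X K) - Matrix.single w w (1 : K))) u v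
          - (((φ (eE K w w le_rfl) : Matrix X X K) - Matrix.single w w (1 : K)) * r) u v) := by
    intro u v w hu hv hw
    set B : Matrix X X K := (φ (eE K w w le_rfl) : Matrix X X K) with hBdef
    set fM : Matrix X X K := Matrix.single w w (1 : K) with hfM
    set s : Matrix X X K := B - fM with hsdef
    have hAB : A * B = B * A := hcomm w hw
    have hA : A = eM + r := by rw [hrdef]; abel
    have hB : B = fM + s := by rw [hsdef]; abel
    have expand : (0 : Matrix X X K) = (eM * fM - fM * eM) + (eM * s - s * eM)
        + (r * fM - fM * r) + (r * s - s * r) := by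
      have : A * B - B * A = 0 := sub_eq_zero.mpr hAB
      calc (0 : Matrix X X K) = A * B - B * A := this.symm
        _ = _ := by rw [hA, hB]; noncomm_ring
    have hef : eM * fM = 0 := Matrix.single_mul_single_of_ne (1 : K) x x w
      (fun h => hw (h.symm)) _
    have hfe : fM * eM = 0 := Matrix.single_mul_single_of_ne (1 : K) w w x
      (fun h => hw h) _
    have h0 := congrArg (fun M : Matrix X X K => M u v) expand
    simp only [Matrix.add_apply, Matrix.sub_apply, Matrix.zero_apply, hef, hfe] at h0
    have h1 : (eM * s) u v = 0 := by
      rw [heM, diagE_mul_apply, if_neg hu]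
    have h2 : (s * eM) u v = 0 := by
      rw [heM, mul_diagE_apply, if_neg hv]
    rw [h1, h2] at h0
    linear_combination h0
  -- key induction: entries of r vanish outside u ≤ x ≤ v
  have key : ∀ n : ℕ, ∀ u v : X, chainLen u v ≤ n → ¬ (u ≤ x ∧ x ≤ v) → r u v = 0 := by
    intro n
    induction n with
    | zero =>
      intro u v hn _
      refine hrJ u v fun hlt => ?_
      have := one_le_chainLen hlt
      omega
    | succ n ih =>
      intro u v hn h
      by_cases hlt : u < v
      · have hu : u ≠ x := by
          rintro rfl
          exact h ⟨le_rfl, hlt.le⟩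
        have hv : v ≠ x := by
          rintro rfl
          exact h ⟨hlt.le, le_rfl⟩
        rcases not_and_or.mp h with hxl | hxr
        · -- ¬ u ≤ x : commute with e_u
          have heq := hentry u v u hu hv hu
          set s : Matrix X X K := (φ (eE K u u le_rfl) : Matrix X X K)
            - Matrix.single u u (1 : K) with hsdef
          have hsE : ∀ a b : X, ¬ a < b → s a b = 0 := hsJ u
          rw [diagE_mul_apply, mul_diagE_apply, if_pos rfl, if_neg (fun hh : v = u => hlt.ne' hh)]
            at heq
          have hrs : (r * s) u v = 0 := by
            rw [Matrix.mul_apply]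
            refine Finset.sum_eq_zero fun k _ => ?_
            by_cases hskv : s k v = 0
            · rw [hskv, mul_zero]
            · have hkv : k < v := by
                by_contra hc
                exact hskv (hsE k v hc)
              have hruk : r u k = 0 := by
                by_cases huk : u ≤ k
                · refine ih u k ?_ ?_
                  · have := chainLen_append huk hkv
                    omega
                  · rintro ⟨h1, _⟩
                    exact hxl h1
                · exact hrJ u k fun hc => huk hc.le
              rw [hruk, zero_mul]
          have hsr : (s * r) u v = 0 := by
            rw [Matrix.mul_apply]
            refine Finset.sum_eq_zero fun k _ => ?_
            by_cases hsuk : s u k = 0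
            · rw [hsuk, zero_mul]
            · have huk : u < k := by
                by_contra hc
                exact hsuk (hsE u k hc)
              have hrkv : r k v = 0 := by
                by_cases hkv : k ≤ v
                · refine ih k v ?_ ?_
                  · have := chainLen_prepend huk hkv
                    omega
                  · rintro ⟨h1, _⟩
                    exact hxl (huk.le.trans h1)
                · exact hrJ k v fun hc => hkv hc.le
              rw [hrkv, mul_zero]
          rw [hrs, hsr] at heq
          simpa using heq
        · -- ¬ x ≤ v : commute with e_v
          have heq := hentry u v v hu hv hv
          set s : Matrix X X K := (φ (eE K v v le_rfl) : Matrix X X K)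
            - Matrix.single v v (1 : K) with hsdef
          have hsE : ∀ a b : X, ¬ a < b → s a b = 0 := hsJ v
          rw [diagE_mul_apply, mul_diagE_apply, if_pos rfl, if_neg (fun hh : u = v => hlt.ne hh)]
            at heq
          have hrs : (r * s) u v = 0 := by
            rw [Matrix.mul_apply]
            refine Finset.sum_eq_zero fun k _ => ?_
            by_cases hskv : s k v = 0
            · rw [hskv, mul_zero]
            · have hkv : k < v := by
                by_contra hc
                exact hskv (hsE k v hc)
              have hruk : r u k = 0 := by
                by_cases huk : u ≤ k
                · refine ih u k ?_ ?_
                  · have := chainLen_append huk hkv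
                    omega
                  · rintro ⟨_, h2⟩
                    exact hxr (h2.trans hkv.le)
                · exact hrJ u k fun hc => huk hc.le
              rw [hruk, zero_mul]
          have hsr : (s * r) u v = 0 := by
            rw [Matrix.mul_apply]
            refine Finset.sum_eq_zero fun k _ => ?_
            by_cases hsuk : s u k = 0
            · rw [hsuk, zero_mul]
            · have huk : u < k := by
                by_contra hc
                exact hsuk (hsE u k hc)
              have hrkv : r k v = 0 := by
                by_cases hkv : k ≤ v
                · refine ih k v ?_ ?_
                  · have := chainLen_prepend huk hkv
                    omega
                  · rintro ⟨_, h2⟩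
                    exact hxr h2
                · exact hrJ k v fun hc => hkv hc.le
              rw [hrkv, mul_zero]
          rw [hrs, hsr] at heq
          simpa using heq
      · exact hrJ u v hlt
  -- entries of A vanish outside u ≤ x ≤ v
  have hA0 : ∀ a b : X, ¬ (a ≤ x ∧ x ≤ b) → A a b = 0 := by
    intro a b hab
    have hr0 : r a b = 0 := key (chainLen a b) a b le_rfl hab
    have heM0 : eM a b = 0 := by
      have : ¬ (x = a ∧ x = b) := by
        rintro ⟨rfl, rfl⟩
        exact hab ⟨le_rfl, le_rfl⟩
      simp [heM, Matrix.single, this]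
    have : A a b = eM a b + r a b := by
      rw [hrdef]
      simp
    rw [this, heM0, hr0, add_zero]
  -- conclude: A lies in every ideal containing e_x
  refine Submodule.mem_sInf.mpr fun I hI => ?_
  obtain ⟨hS, hcl⟩ := hI
  have hexx : Matrix.single x x (1 : K) ∈ I := hS rfl
  have hgen : ∀ a b : X, a ≤ x → x ≤ b → Matrix.single a b (1 : K) ∈ I := by
    intro a b hax hxb
    have h1 : (Matrix.single x b (1 : K)) ∈ IncAlg K X := (eE K x b hxb).2
    have h2 := (hcl _ h1 _ hexx).2
    rw [Matrix.single_mul_single_same, one_mul] at h2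
    have h3 : (Matrix.single a x (1 : K)) ∈ IncAlg K X := (eE K a x hax).2
    have h4 := (hcl _ h3 _ h2).1
    rwa [Matrix.single_mul_single_same, one_mul] at h4
  have hAsum : A = ∑ a : X, ∑ b : X, A a b • Matrix.single a b (1 : K) := by
    conv_lhs => rw [Matrix.matrix_eq_sum_single A]
    refine Finset.sum_congr rfl fun a _ => Finset.sum_congr rfl fun b _ => ?_
    rw [Matrix.smul_single, smul_eq_mul, mul_one]
  show A ∈ I
  rw [hAsum]
  refine Submodule.sum_mem I fun a _ => Submodule.sum_mem I fun b _ => ?_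
  by_cases hab : a ≤ x ∧ x ≤ b
  · exact Submodule.smul_mem I _ (hgen a b hab.1 hab.2)
  · rw [hA0 a b hab, zero_smul]
    exact I.zero_mem
end
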